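/- For the modified Bessel operators acting on ℂ[z_0,…,z_{m−1}] one has: B̃(z_0) e^{−z_0} = (2 − m + z_0) e^{−z_0}, and B̃(z_k) e^{−z_0} = z_k e^{−z_0} for k ∈ {1,…,m−1}, where the identities hold as formal power series (equivalently, as identities of real-analytic functions). -/

import Mathlib

noncomputable section

/-- The diagonal entries of the bilinear form `β`: `β_{00} = −1`, `β_{kk} = 1` for `k ≥ 1`. -/
def sgnC (m : ℕ) (i : Fin m) : ℂ := if (i : ℕ) = 0 then -1 else 1

/-- The plain partial derivative `∂^i` of a function of `m` complex variables. -/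
def Dc (m : ℕ) (i : Fin m) (f : (Fin m → ℂ) → ℂ) : (Fin m → ℂ) → ℂ :=
  fun z => fderiv ℂ f z (Pi.single i 1)

/-- The lowered partial derivative `∂_i = ∑_k β_{ik} ∂^k`. -/
def dlowF (m : ℕ) (i : Fin m) (f : (Fin m → ℂ) → ℂ) : (Fin m → ℂ) → ℂ :=
  fun z => sgnC m i * Dc m i f z

/-- The Euler operator `E = ∑_{i,j} β^{ij} z_i ∂_j`. -/
def EF (m : ℕ) (f : (Fin m → ℂ) → ℂ) : (Fin m → ℂ) → ℂ :=
  fun z => ∑ i, sgnC m i * (z i * dlowF m i f z)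

/-- The Laplacian `Δ = ∑_{i,j} β^{ij} ∂_i ∂_j`. -/
def LapF (m : ℕ) (f : (Fin m → ℂ) → ℂ) : (Fin m → ℂ) → ℂ :=
  fun z => ∑ i, sgnC m i * dlowF m i (dlowF m i f) z

/-- The Bessel operator `B(z_i) = (m − 2 + 2E)∂_i − z_i Δ` on functions. -/
def BFn (m : ℕ) (i : Fin m) (f : (Fin m → ℂ) → ℂ) : (Fin m → ℂ) → ℂ :=
  fun z => ((m : ℂ) - 2) * dlowF m i f z + 2 * EF m (dlowF m i f) z - z i * LapF m f z

/-- The modified Bessel operator: `B̃(z_0) = −B(z_0)`, `B̃(z_k) = B(z_k)` for `k ≥ 1`. -/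
def BtFn (m : ℕ) (i : Fin m) (f : (Fin m → ℂ) → ℂ) : (Fin m → ℂ) → ℂ :=
  fun z => sgnC m i * BFn m i f z

lemma Dc_exp (m : ℕ) [NeZero m] (i : Fin m) (z : Fin m → ℂ) :
    Dc m i (fun w : Fin m → ℂ => Complex.exp (-(w 0))) z =
      if i = 0 then -Complex.exp (-(z 0)) else 0 := by
  have h1 : HasFDerivAt (fun w : Fin m → ℂ => w 0)
      (ContinuousLinearMap.proj 0 : (Fin m → ℂ) →L[ℂ] ℂ) z :=
    (hasFDerivAt_apply 0 z)
  have h2 : HasFDerivAt (fun x : Fin m → ℂ => -x 0)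
      (-(ContinuousLinearMap.proj 0 : (Fin m → ℂ) →L[ℂ] ℂ)) z := h1.neg
  have h3 := (Complex.hasDerivAt_exp (-(z 0))).comp_hasFDerivAt z h2
  unfold Dc
  rw [show (fun w : Fin m → ℂ => Complex.exp (-(w 0))) =
    (Complex.exp ∘ fun x : Fin m → ℂ => -x 0) from rfl, h3.fderiv]
  simp [Pi.single_apply]
  split <;> simp_all [eq_comm]

lemma sgn0 (m : ℕ) [NeZero m] : sgnC m 0 = -1 := by simp [sgnC]

lemma sgnk (m : ℕ) [NeZero m] (k : Fin m) (hk : (k : ℕ) ≠ 0) : sgnC m k = 1 := by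
  simp [sgnC, hk]

lemma dlow0 (m : ℕ) [NeZero m] :
    dlowF m 0 (fun w : Fin m → ℂ => Complex.exp (-(w 0))) =
      fun z => Complex.exp (-(z 0)) := by
  funext z
  simp [dlowF, Dc_exp, sgn0]

lemma dlowk (m : ℕ) [NeZero m] (k : Fin m) (hk : (k : ℕ) ≠ 0) :
    dlowF m k (fun w : Fin m → ℂ => Complex.exp (-(w 0))) = fun _ => 0 := by
  funext z
  have hk' : k ≠ 0 := by
    intro h; exact hk (by simp [h])
  simp [dlowF, Dc_exp, hk']

lemma dlow_zero (m : ℕ) (i : Fin m) :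
    dlowF m i (fun _ => (0 : ℂ)) = fun _ => 0 := by
  funext z
  simp [dlowF, Dc, fderiv_const]

lemma EF_exp (m : ℕ) [NeZero m] (z : Fin m → ℂ) :
    EF m (fun w : Fin m → ℂ => Complex.exp (-(w 0))) z = -(z 0) * Complex.exp (-(z 0)) := by
  unfold EF
  rw [Finset.sum_eq_single 0]
  · rw [sgn0, dlow0]; ring
  · intro b _ hb
    have hb' : (b : ℕ) ≠ 0 := by
      intro h; exact hb (Fin.ext (by simp [h]))
    rw [dlowk m b hb']
    simp
  · simp

lemma LapF_exp (m : ℕ) [NeZero m] (z : Fin m → ℂ) :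
    LapF m (fun w : Fin m → ℂ => Complex.exp (-(w 0))) z = -Complex.exp (-(z 0)) := by
  unfold LapF
  rw [Finset.sum_eq_single 0]
  · rw [sgn0, dlow0, dlow0]; ring
  · intro b _ hb
    have hb' : (b : ℕ) ≠ 0 := by
      intro h; exact hb (Fin.ext (by simp [h]))
    rw [dlowk m b hb', dlow_zero]
    simp
  · simp

/-- `B̃(z_0) e^{−z_0} = (2 − m + z_0) e^{−z_0}` and `B̃(z_k) e^{−z_0} = z_k e^{−z_0}`
for `k ∈ {1,…,m−1}`, as identities of (real-)analytic functions. -/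
theorem stmt18 (m : ℕ) [NeZero m] :
    (∀ z : Fin m → ℂ,
      BtFn m 0 (fun w => Complex.exp (-(w 0))) z =
        (2 - (m : ℂ) + z 0) * Complex.exp (-(z 0))) ∧
    (∀ k : Fin m, (k : ℕ) ≠ 0 → ∀ z : Fin m → ℂ,
      BtFn m k (fun w => Complex.exp (-(w 0))) z = z k * Complex.exp (-(z 0))) := by
  constructor
  · intro z
    unfold BtFn BFn
    rw [sgn0, dlow0, EF_exp, LapF_exp]
    ring
  · intro k hk z
    unfold BtFn BFn
    rw [sgnk m k hk, dlowk m k hk, LapF_exp]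
    have hE : EF m (fun _ : Fin m → ℂ => (0 : ℂ)) z = 0 := by
      unfold EF
      apply Finset.sum_eq_zero
      intro i _
      rw [dlow_zero]
      simp
    rw [hE]
    ring
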